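/- Let H be a d×d real matrix with nonnegative off-diagonal entries and all row sums equal to 1, v its left eigenvector for the eigenvalue 1 with v·1' = 1, and H̃ := H − 1'v. Let w : (0, ∞) → ℝ^d (row vector valued) be continuous. Then the function Ŝ(t) := ∫₁ᵗ w(x)·(H̃/x)·(t/x)^{H̃} dx + w(t) − w(1)·t^{H̃} is continuous on (0, ∞), satisfies Ŝ(1) = 0, and is the unique continuous solution of equation (Equ2): Ŝ(t) = w(t) − w(1) + ∫₁ᵗ (Ŝ(x)·H̃)/x dx for all t > 0. -/

import Mathlib

open MeasureTheory ProbabilityTheory Filter Matrix Set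
open scoped Topology NNReal

noncomputable section

instance matrixMeasurableSpace {d : ℕ} : MeasurableSpace (Matrix (Fin d) (Fin d) ℝ) :=
  inferInstanceAs (MeasurableSpace (Fin d → Fin d → ℝ))

/-- Euclidean norm of a row vector in `Fin d → ℝ`. -/
def eNorm {d : ℕ} (x : Fin d → ℝ) : ℝ := Real.sqrt (∑ i, x i ^ 2)

/-- Operator norm of a `d × d` real matrix acting by right multiplication on row
vectors, induced by the Euclidean norm. -/
def opNorm {d : ℕ} (M : Matrix (Fin d) (Fin d) ℝ) : ℝ :=
  sSup ((fun x => eNorm (Matrix.vecMul x M)) '' {x : Fin d → ℝ | eNorm x = 1})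

/-- `t ^ M := exp (M · ln t)` for a square matrix `M`. -/
def mpow {d : ℕ} (M : Matrix (Fin d) (Fin d) ℝ) (t : ℝ) : Matrix (Fin d) (Fin d) ℝ :=
  NormedSpace.exp (Real.log t • M)

/-- `log x := ln (max e x)`. -/
def rlog (x : ℝ) : ℝ := Real.log (max (Real.exp 1) x)

/-- The `k`-th standard basis row vector of `ℝ^d`. -/
def bvec {d : ℕ} (k : Fin d) : Fin d → ℝ := fun j => if j = k then 1 else 0

/-- Entrywise integral of a matrix-valued function over a set. -/
def matInt {d : ℕ} (f : ℝ → Matrix (Fin d) (Fin d) ℝ) (s : Set ℝ) :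
    Matrix (Fin d) (Fin d) ℝ :=
  Matrix.of fun i j => ∫ x in s, f x i j

/-- The matrix `1'v` whose every row is the row vector `v`. -/
def onevMat {d : ℕ} (v : Fin d → ℝ) : Matrix (Fin d) (Fin d) ℝ :=
  Matrix.of fun _ j => v j

/-- `H̃ := H − 1'v`. -/
def Htilde {d : ℕ} (H : Matrix (Fin d) (Fin d) ℝ) (v : Fin d → ℝ) :
    Matrix (Fin d) (Fin d) ℝ :=
  H - onevMat v

/-- `Σ₁ := diag(v) − v'v`. -/
def Sigma1 {d : ℕ} (v : Fin d → ℝ) : Matrix (Fin d) (Fin d) ℝ :=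
  Matrix.of fun i j => (if i = j then v i else 0) - v i * v j

/-- `Σ₂ := Σ_q v_q V_q`. -/
def Sigma2 {d : ℕ} (v : Fin d → ℝ) (V : Fin d → Matrix (Fin d) (Fin d) ℝ) :
    Matrix (Fin d) (Fin d) ℝ :=
  ∑ q, v q • V q

/-- A `d`-dimensional Brownian motion with covariance matrix `Λ`: starts at `0`,
has a.s. continuous paths on `[0,∞)`, independent increments, and Gaussian
increments `W_t − W_s ~ N(0, (t−s)Λ)` (characterized through one-dimensional
projections). -/
structure IsBM {Ω : Type} [MeasurableSpace Ω] (μ : Measure Ω) {d : ℕ}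
    (Λ : Matrix (Fin d) (Fin d) ℝ) (W : ℝ → Ω → Fin d → ℝ) : Prop where
  meas : ∀ t : ℝ, Measurable (W t)
  start : ∀ᵐ ω ∂μ, W 0 ω = 0
  cont : ∀ᵐ ω ∂μ, ContinuousOn (fun t => W t ω) (Ici (0 : ℝ))
  indep : ∀ (n : ℕ) (t : Fin (n + 1) → ℝ), Monotone t → 0 ≤ t 0 →
    iIndepFun
      (fun i : Fin n => fun ω => W (t i.succ) ω - W (t i.castSucc) ω) μ
  gauss : ∀ s t : ℝ, 0 ≤ s → s ≤ t → ∀ u : Fin d → ℝ,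
    μ.map (fun ω => ∑ i, u i * (W t ω i - W s ω i)) =
      gaussianReal 0 (Real.toNNReal ((t - s) * (∑ i, ∑ j, u i * Λ i j * u j)))

/-- A standard one-dimensional Brownian motion. -/
structure IsBM1 {Ω : Type} [MeasurableSpace Ω] (μ : Measure Ω)
    (W : ℝ → Ω → ℝ) : Prop where
  meas : ∀ t : ℝ, Measurable (W t)
  start : ∀ᵐ ω ∂μ, W 0 ω = 0
  cont : ∀ᵐ ω ∂μ, ContinuousOn (fun t => W t ω) (Ici (0 : ℝ))
  indep : ∀ (n : ℕ) (t : Fin (n + 1) → ℝ), Monotone t → 0 ≤ t 0 →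
    iIndepFun
      (fun i : Fin n => fun ω => W (t i.succ) ω - W (t i.castSucc) ω) μ
  gauss : ∀ s t : ℝ, 0 ≤ s → s ≤ t →
    μ.map (fun ω => W t ω - W s ω) = gaussianReal 0 (Real.toNNReal (t - s))

/-- A centered Gaussian law on `ι → ℝ` with covariance matrix `Γ`, characterized
through one-dimensional projections. -/
def IsCenteredGaussianLaw {ι : Type} [Fintype ι] (ν : Measure (ι → ℝ))
    (Γ : Matrix ι ι ℝ) : Prop :=
  IsProbabilityMeasure ν ∧
    ∀ u : ι → ℝ, ν.map (fun x => ∑ i, u i * x i) =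
      gaussianReal 0 (Real.toNNReal (∑ i, ∑ j, u i * Γ i j * u j))

/-- Convergence in distribution (weak convergence of the laws), characterized by
bounded continuous test functions. -/
def TendstoInDistribution {Ω : Type} [MeasurableSpace Ω] (μ : Measure Ω)
    {E : Type} [MeasurableSpace E] [TopologicalSpace E]
    (Z : ℕ → Ω → E) (ν : Measure E) : Prop :=
  ∀ f : BoundedContinuousFunction E ℝ,
    Tendsto (fun n => ∫ ω, f (Z n ω) ∂μ) atTop (𝓝 (∫ x, f x ∂ν))

/-- The generalized Friedman urn model. -/
structure IsGFU {Ω : Type} {m0 : MeasurableSpace Ω} (μ : Measure Ω)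
    (ℱ : MeasureTheory.Filtration ℕ m0) {d : ℕ}
    (X : ℕ → Ω → Fin d → ℝ) (D : ℕ → Ω → Matrix (Fin d) (Fin d) ℝ)
    (Y : ℕ → Ω → Fin d → ℝ) : Prop where
  prob : IsProbabilityMeasure μ
  Y0_det : ∃ y0 : Fin d → ℝ, (∀ i, 0 < y0 i) ∧ ∀ ω, Y 0 ω = y0
  X_meas : ∀ m, 1 ≤ m → Measurable[ℱ m] (X m)
  D_meas : ∀ m, 1 ≤ m → Measurable[ℱ m] (D m)
  X_basis : ∀ m, 1 ≤ m → ∀ ω, ∃ k, X m ω = bvec k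
  draw : ∀ m, 1 ≤ m → ∀ k : Fin d,
    condExp (ℱ (m - 1)) μ ({ω | X m ω = bvec k}.indicator fun _ => (1 : ℝ))
      =ᵐ[μ] fun ω => Y (m - 1) ω k / ∑ j, Y (m - 1) ω j
  update : ∀ m, 1 ≤ m → ∀ ω, Y m ω = Y (m - 1) ω + Matrix.vecMul (X m ω) (D m ω)
  condIndep : ∀ m, 1 ≤ m → ∀ k : Fin d, ∀ φ : Matrix (Fin d) (Fin d) ℝ → ℝ,
    Measurable φ → (∀ A, |φ A| ≤ 1) →
    condExp (ℱ (m - 1)) μ (fun ω => ({ω' | X m ω' = bvec k}.indicator (fun _ => (1 : ℝ)) ω)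
        * φ (D m ω))
      =ᵐ[μ] fun ω =>
        (condExp (ℱ (m - 1)) μ ({ω' | X m ω' = bvec k}.indicator fun _ => (1 : ℝ)) ω)
          * (condExp (ℱ (m - 1)) μ (fun ω' => φ (D m ω')) ω)

/-- The (random) generating matrix `H_m = E[D_m | ℱ_{m−1}]`. -/
def genMat {Ω : Type} {m0 : MeasurableSpace Ω} (μ : Measure Ω)
    (ℱ : MeasureTheory.Filtration ℕ m0) {d : ℕ}
    (D : ℕ → Ω → Matrix (Fin d) (Fin d) ℝ) (m : ℕ) (ω : Ω) :
    Matrix (Fin d) (Fin d) ℝ :=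
  Matrix.of fun i j => condExp (ℱ (m - 1)) μ (fun ω' => D m ω' i j) ω

/-- The allocation counts `N_n = Σ_{m=1}^n X_m`. -/
def urnN {Ω : Type} {d : ℕ} (X : ℕ → Ω → Fin d → ℝ) (n : ℕ) (ω : Ω) : Fin d → ℝ :=
  ∑ m ∈ Finset.Icc 1 n, X m ω

/-- The total number of balls `a_n = Y_n · 1'`. -/
def urnTotal {Ω : Type} {d : ℕ} (Y : ℕ → Ω → Fin d → ℝ) (n : ℕ) (ω : Ω) : ℝ :=
  ∑ j, Y n ω j

/-- Assumption 1. -/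
structure Assump1 {Ω : Type} {m0 : MeasurableSpace Ω} (μ : Measure Ω)
    (ℱ : MeasureTheory.Filtration ℕ m0) {d : ℕ}
    (D : ℕ → Ω → Matrix (Fin d) (Fin d) ℝ)
    (H : Matrix (Fin d) (Fin d) ℝ) (τ : ℝ) : Prop where
  tau_nonneg : 0 ≤ τ
  offdiag_nonneg : ∀ q k, q ≠ k → 0 ≤ H q k
  rowsum_one : ∀ q, ∑ k, H q k = 1
  approx : ∀ᵐ ω ∂μ,
    (fun n : ℕ => ∑ m ∈ Finset.Icc 1 n, opNorm (genMat μ ℱ D m ω - H))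
      =o[atTop] fun n : ℕ => (n : ℝ) ^ ((1 : ℝ) / 2 - τ)

/-- The conditional covariance matrix of the `q`-th row of `D_n` given `ℱ_{n−1}`. -/
def condCov {Ω : Type} {m0 : MeasurableSpace Ω} (μ : Measure Ω)
    (ℱ : MeasureTheory.Filtration ℕ m0) {d : ℕ}
    (D : ℕ → Ω → Matrix (Fin d) (Fin d) ℝ) (n : ℕ) (q : Fin d) (ω : Ω) :
    Matrix (Fin d) (Fin d) ℝ :=
  Matrix.of fun k l =>
    condExp (ℱ (n - 1)) μ (fun ω' => D n ω' q k * D n ω' q l) ω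
      - (condExp (ℱ (n - 1)) μ (fun ω' => D n ω' q k) ω)
        * (condExp (ℱ (n - 1)) μ (fun ω' => D n ω' q l) ω)

/-- Assumption 2. -/
structure Assump2 {Ω : Type} {m0 : MeasurableSpace Ω} (μ : Measure Ω)
    (ℱ : MeasureTheory.Filtration ℕ m0) {d : ℕ}
    (D : ℕ → Ω → Matrix (Fin d) (Fin d) ℝ)
    (V : Fin d → Matrix (Fin d) (Fin d) ℝ) (ε : ℝ) : Prop where
  eps_pos : 0 < ε
  eps_lt : ε < 1 / 2
  moment : ∃ C : ℝ, ∀ n : ℕ, 1 ≤ n → ∫ ω, opNorm (D n ω) ^ (2 + ε) ∂μ ≤ C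
  V_psd : ∀ q, (V q).PosSemidef
  cov : ∀ q, ∀ᵐ ω ∂μ,
    (fun n : ℕ =>
        opNorm ((∑ m ∈ Finset.Icc 1 n, condCov μ ℱ D m q ω) - (n : ℝ) • V q))
      =o[atTop] fun n : ℕ => (n : ℝ) ^ (1 - ε)

/-- Jordan-form data for the generating matrix `H`, as in Assumption 1: an
invertible complex matrix `T` with first column `1'` conjugating `H` into
`diag(1, J_2, …, J_s)`, together with the quantities `ρ` and `ν`. -/
structure JordanData {d : ℕ} (H : Matrix (Fin d) (Fin d) ℝ) where
  hd : 0 < d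
  s : ℕ
  hs : 0 < s
  lam : Fin s → ℂ
  blk : Fin d → Fin s
  T : Matrix (Fin d) (Fin d) ℂ
  rho : ℝ
  nu : ℕ
  hT : IsUnit T.det
  hTcol : ∀ i, T i ⟨0, hd⟩ = 1
  hmono : Monotone blk
  hsurj : Function.Surjective blk
  hblk0 : ∀ i, blk i = ⟨0, hs⟩ → i = ⟨0, hd⟩
  hlam0 : lam ⟨0, hs⟩ = 1
  hJ : T⁻¹ * H.map (fun x => (x : ℂ)) * T = Matrix.of (fun i j =>
    if j = i then lam (blk i)
    else if (i : ℕ) + 1 = (j : ℕ) ∧ blk i = blk j then 1 else 0)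
  hrho : IsGreatest {x : ℝ | ∃ t, t ≠ ⟨0, hs⟩ ∧ x = (lam t).re} rho
  hnu : IsGreatest {k : ℕ | ∃ t, t ≠ ⟨0, hs⟩ ∧ (lam t).re = rho ∧
    k = (Finset.univ.filter fun i => blk i = t).card} nu

-- auxiliary lemmas for equ2_solution
namespace Equ2Aux

open NormedSpace

variable {d : ℕ}

lemma exp_entry_hasDerivAt (A : Matrix (Fin d) (Fin d) ℝ) (s : ℝ) (i j : Fin d) :
    HasDerivAt (fun u : ℝ => exp (u • A) i j) ((exp (s • A) * A) i j) s := by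
  letI : SeminormedRing (Matrix (Fin d) (Fin d) ℝ) := Matrix.linftyOpSemiNormedRing
  letI : NormedRing (Matrix (Fin d) (Fin d) ℝ) := Matrix.linftyOpNormedRing
  letI : NormedAlgebra ℝ (Matrix (Fin d) (Fin d) ℝ) := Matrix.linftyOpNormedAlgebra
  have h := hasDerivAt_exp_smul_const (𝕂 := ℝ) A s
  let L : Matrix (Fin d) (Fin d) ℝ →ₗ[ℝ] ℝ :=
    { toFun := fun M => M i j, map_add' := fun _ _ => rfl, map_smul' := fun _ _ => rfl }
  exact (LinearMap.toContinuousLinearMap L).hasFDerivAt.comp_hasDerivAt s h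

lemma mpow_one (A : Matrix (Fin d) (Fin d) ℝ) : mpow A 1 = 1 := by
  simp [mpow, Real.log_one, exp_zero]

lemma mpow_mul (A : Matrix (Fin d) (Fin d) ℝ) {a b : ℝ} (ha : 0 < a) (hb : 0 < b) :
    mpow A a * mpow A b = mpow A (a * b) := by
  rw [mpow, mpow, mpow, Real.log_mul ha.ne' hb.ne', add_smul]
  exact (Matrix.exp_add_of_commute _ _
    (((Commute.refl A).smul_left _).smul_right _)).symm

lemma mpow_comm (A : Matrix (Fin d) (Fin d) ℝ) (u : ℝ) :
    A * mpow A u = mpow A u * A := by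
  letI : SeminormedRing (Matrix (Fin d) (Fin d) ℝ) := Matrix.linftyOpSemiNormedRing
  letI : NormedRing (Matrix (Fin d) (Fin d) ℝ) := Matrix.linftyOpNormedRing
  letI : NormedAlgebra ℝ (Matrix (Fin d) (Fin d) ℝ) := Matrix.linftyOpNormedAlgebra
  exact (((Commute.refl A).smul_right (Real.log u)).exp_right).eq

lemma mpow_entry_hasDerivAt (A : Matrix (Fin d) (Fin d) ℝ) {t : ℝ} (ht : 0 < t) (i j : Fin d) :
    HasDerivAt (fun u : ℝ => mpow A u i j) ((t⁻¹ • (mpow A t * A)) i j) t := by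
  have h1 := exp_entry_hasDerivAt A (Real.log t) i j
  have h2 := Real.hasDerivAt_log ht.ne'
  have h := h1.comp t h2
  simpa [mpow, Matrix.smul_apply, mul_comm, Function.comp_def] using h

lemma hasDerivAt_vecMul {c : ℝ → Fin d → ℝ} {c' : Fin d → ℝ}
    {m : ℝ → Matrix (Fin d) (Fin d) ℝ} {m' : Matrix (Fin d) (Fin d) ℝ} {t : ℝ}
    (hc : HasDerivAt c c' t) (hm : ∀ i j, HasDerivAt (fun u => m u i j) (m' i j) t) :
    HasDerivAt (fun u => c u ᵥ* m u) (c' ᵥ* m t + c t ᵥ* m') t := by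
  rw [hasDerivAt_pi]
  intro j
  have h : HasDerivAt (fun u => ∑ i, c u i * m u i j)
      (∑ i, (c' i * m t i j + c t i * m' i j)) t :=
    HasDerivAt.fun_sum fun i _ => (hasDerivAt_pi.1 hc i).mul (hm i j)
  have he : (fun u => (c u ᵥ* m u) j) = fun u => ∑ i, c u i * m u i j := by
    funext u; simp [Matrix.vecMul, dotProduct]
  rw [he]
  refine h.congr_deriv ?_
  simp [Matrix.vecMul, dotProduct, Finset.sum_add_distrib]

lemma continuousOn_vecMul {f : ℝ → Fin d → ℝ} {g : ℝ → Matrix (Fin d) (Fin d) ℝ} {s : Set ℝ}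
    (hf : ContinuousOn f s) (hg : ContinuousOn g s) :
    ContinuousOn (fun x => f x ᵥ* g x) s := by
  apply continuousOn_pi.2
  intro j
  have : ∀ x, (f x ᵥ* g x) j = ∑ i, f x i * g x i j := by
    intro x; simp [Matrix.vecMul, dotProduct]
  simp only [this]
  apply continuousOn_finset_sum
  intro i _
  exact (continuousOn_pi.1 hf i).mul (continuousOn_pi.1 (continuousOn_pi.1 hg i) j)

lemma continuousOn_mpow (A : Matrix (Fin d) (Fin d) ℝ) :
    ContinuousOn (fun t => mpow A t) (Ioi (0 : ℝ)) := by
  intro t ht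
  apply ContinuousAt.continuousWithinAt
  apply continuousAt_pi.2
  intro i
  apply continuousAt_pi.2
  intro j
  exact (mpow_entry_hasDerivAt A ht i j).continuousAt

lemma vecMul_smul_right (u : Fin d → ℝ) (c : ℝ) (M : Matrix (Fin d) (Fin d) ℝ) :
    u ᵥ* (c • M) = c • (u ᵥ* M) := by
  ext j
  simp [Matrix.vecMul, dotProduct, Finset.mul_sum, mul_left_comm]

end Equ2Aux

/-- Proposition 3.2 of Zhang–Hu, deterministic form: for a
continuous `w` on `(0,∞)`, the function
`Ŝ(t) = ∫₁ᵗ w(x)(H̃/x)(t/x)^{H̃} dx + w(t) − w(1) t^{H̃}` is the unique continuous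
solution of equation (Equ2). -/
theorem equ2_solution
    {d : ℕ} (hd : 0 < d)
    (H : Matrix (Fin d) (Fin d) ℝ) (v : Fin d → ℝ)
    (hH_offdiag : ∀ q k, q ≠ k → 0 ≤ H q k)
    (hH_rowsum : ∀ q, ∑ k, H q k = 1)
    (hv_eig : v ᵥ* H = v) (hv_sum : ∑ i, v i = 1)
    (w : ℝ → Fin d → ℝ)
    (hw_cont : ContinuousOn w (Ioi (0 : ℝ))) :
    ∃ S : ℝ → Fin d → ℝ,
      -- `Ŝ(t) := ∫₁ᵗ w(x)(H̃/x)(t/x)^{H̃} dx + w(t) − w(1) t^{H̃}`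
      S = (fun t =>
        (∫ x in (1 : ℝ)..t,
            (w x ᵥ* (x⁻¹ • Htilde H v)) ᵥ* mpow (Htilde H v) (t / x))
          + w t - w 1 ᵥ* mpow (Htilde H v) t) ∧
      -- `Ŝ` is continuous on `(0, ∞)` and `Ŝ(1) = 0`
      ContinuousOn S (Ioi (0 : ℝ)) ∧ S 1 = 0 ∧
      -- `Ŝ` solves (Equ2): `Ŝ(t) = w(t) − w(1) + ∫₁ᵗ Ŝ(x)H̃/x dx` for all `t > 0`
      (∀ t : ℝ, 0 < t →
        S t = w t - w 1 + ∫ x in (1 : ℝ)..t, x⁻¹ • (S x ᵥ* Htilde H v)) ∧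
      -- uniqueness among continuous solutions
      (∀ Z : ℝ → Fin d → ℝ, ContinuousOn Z (Ioi (0 : ℝ)) →
        (∀ t : ℝ, 0 < t →
          Z t = w t - w 1 + ∫ x in (1 : ℝ)..t, x⁻¹ • (Z x ᵥ* Htilde H v)) →
        ∀ t : ℝ, 0 < t → Z t = S t) := by
    classical
  have hsub : ∀ {t : ℝ}, 0 < t → uIcc (1 : ℝ) t ⊆ Ioi (0 : ℝ) := by
    intro t ht x hx
    exact ((lt_min one_pos ht).trans_le hx.1)
  set A : Matrix (Fin d) (Fin d) ℝ := Htilde H v with hA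
  set f : ℝ → Fin d → ℝ := fun x => (w x ᵥ* (x⁻¹ • A)) ᵥ* mpow A x⁻¹ with hfdef
  have hinv_cont : ContinuousOn (fun x : ℝ => x⁻¹) (Ioi (0 : ℝ)) :=
    ContinuousOn.inv₀ continuousOn_id (fun x hx => ne_of_gt hx)
  have hf_cont : ContinuousOn f (Ioi (0 : ℝ)) := by
    apply Equ2Aux.continuousOn_vecMul
    · exact Equ2Aux.continuousOn_vecMul hw_cont (hinv_cont.smul continuousOn_const)
    · exact (Equ2Aux.continuousOn_mpow A).comp hinv_cont
        (fun x hx => mem_Ioi.2 (inv_pos.2 hx))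
  set Φ : ℝ → Fin d → ℝ := fun t => ∫ x in (1:ℝ)..t, f x with hΦdef
  have hf_int : ∀ {t : ℝ}, 0 < t → IntervalIntegrable f MeasureTheory.volume 1 t :=
    fun {t} ht => (hf_cont.mono (hsub ht)).intervalIntegrable
  have hΦ' : ∀ t : ℝ, 0 < t → HasDerivAt Φ (f t) t := by
    intro t ht
    exact intervalIntegral.integral_hasDerivAt_right (hf_int ht)
      (hf_cont.stronglyMeasurableAtFilter isOpen_Ioi t ht)
      (hf_cont.continuousAt (isOpen_Ioi.mem_nhds ht))
  have hmulinv : ∀ {t : ℝ}, 0 < t → mpow A t⁻¹ * mpow A t = 1 := by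
    intro t ht
    rw [Equ2Aux.mpow_mul A (inv_pos.2 ht) ht, inv_mul_cancel₀ ht.ne', Equ2Aux.mpow_one]
  set S : ℝ → Fin d → ℝ := fun t =>
    (∫ x in (1 : ℝ)..t, (w x ᵥ* (x⁻¹ • A)) ᵥ* mpow A (t / x)) + w t - w 1 ᵥ* mpow A t
    with hSdef
  have key : ∀ t : ℝ, 0 < t → S t = (Φ t - w 1) ᵥ* mpow A t + w t := by
    intro t ht
    have h1 : (∫ x in (1:ℝ)..t, (w x ᵥ* (x⁻¹ • A)) ᵥ* mpow A (t / x))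
        = ∫ x in (1:ℝ)..t, (f x) ᵥ* mpow A t := by
      apply intervalIntegral.integral_congr
      intro x hx
      have hx0 : 0 < x := hsub ht hx
      have hm : mpow A (t / x) = mpow A x⁻¹ * mpow A t := by
        rw [Equ2Aux.mpow_mul A (inv_pos.2 hx0) ht, inv_mul_eq_div]
      show (w x ᵥ* (x⁻¹ • A)) ᵥ* mpow A (t / x) = f x ᵥ* mpow A t
      rw [hm, hfdef]
      simp [← Matrix.vecMul_vecMul]
    have h2 : (∫ x in (1:ℝ)..t, (f x) ᵥ* mpow A t) = Φ t ᵥ* mpow A t := by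
      have h := (LinearMap.toContinuousLinearMap
        ((mpow A t).vecMulLinear)).intervalIntegral_comp_comm (hf_int ht)
      simpa using h
    rw [hSdef]
    show (∫ x in (1:ℝ)..t, (w x ᵥ* (x⁻¹ • A)) ᵥ* mpow A (t / x)) + w t - w 1 ᵥ* mpow A t
      = (Φ t - w 1) ᵥ* mpow A t + w t
    rw [h1, h2, Matrix.sub_vecMul]
    abel
  have hG' : ∀ t : ℝ, 0 < t → HasDerivAt (fun u => (Φ u - w 1) ᵥ* mpow A u)
      (t⁻¹ • (S t ᵥ* A)) t := by
    intro t ht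
    have hc : HasDerivAt (fun u => Φ u - w 1) (f t) t := (hΦ' t ht).sub_const _
    have hm := fun i j => Equ2Aux.mpow_entry_hasDerivAt A ht i j
    have h := Equ2Aux.hasDerivAt_vecMul hc hm
    convert h using 1
    have hft : f t ᵥ* mpow A t = t⁻¹ • (w t ᵥ* A) := by
      rw [hfdef]
      show ((w t ᵥ* (t⁻¹ • A)) ᵥ* mpow A t⁻¹) ᵥ* mpow A t = t⁻¹ • (w t ᵥ* A)
      rw [Matrix.vecMul_vecMul, hmulinv ht, Matrix.vecMul_one,
        Equ2Aux.vecMul_smul_right]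
    rw [hft, key t ht, Matrix.add_vecMul, smul_add,
      Equ2Aux.vecMul_smul_right, ← Matrix.vecMul_vecMul]
    abel
  have hG_cont : ContinuousOn (fun u => (Φ u - w 1) ᵥ* mpow A u) (Ioi (0 : ℝ)) :=
    fun u hu => ((hG' u hu).continuousAt).continuousWithinAt
  have hS_cont : ContinuousOn S (Ioi (0 : ℝ)) := by
    apply ContinuousOn.congr (hG_cont.add hw_cont)
    intro u hu
    exact key u hu
  have hS1 : S 1 = 0 := by
    rw [hSdef]
    show (∫ x in (1:ℝ)..(1:ℝ), (w x ᵥ* (x⁻¹ • A)) ᵥ* mpow A (1 / x)) + w 1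
        - w 1 ᵥ* mpow A 1 = 0
    rw [intervalIntegral.integral_same, Equ2Aux.mpow_one, Matrix.vecMul_one]
    simp
  have hS_int_cont : ContinuousOn (fun x => x⁻¹ • (S x ᵥ* A)) (Ioi (0 : ℝ)) :=
    hinv_cont.smul (Equ2Aux.continuousOn_vecMul hS_cont continuousOn_const)
  have hSolve : ∀ t : ℝ, 0 < t →
      S t = w t - w 1 + ∫ x in (1:ℝ)..t, x⁻¹ • (S x ᵥ* A) := by
    intro t ht
    have hder : ∀ x ∈ uIcc (1:ℝ) t,
        HasDerivAt (fun u => (Φ u - w 1) ᵥ* mpow A u) (x⁻¹ • (S x ᵥ* A)) x := by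
      intro x hx
      exact hG' x (hsub ht hx)
    have hint : IntervalIntegrable (fun x => x⁻¹ • (S x ᵥ* A)) MeasureTheory.volume 1 t :=
      (hS_int_cont.mono (hsub ht)).intervalIntegrable
    have hftc := intervalIntegral.integral_eq_sub_of_hasDerivAt hder hint
    have hG1 : (Φ 1 - w 1) ᵥ* mpow A 1 = -(w 1) := by
      have hΦ1 : Φ 1 = 0 := by
        rw [hΦdef]; exact intervalIntegral.integral_same
      rw [hΦ1, Equ2Aux.mpow_one, Matrix.vecMul_one, zero_sub]
    rw [key t ht, hftc, hG1]
    abel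
  refine ⟨S, rfl, hS_cont, hS1, hSolve, ?_⟩
  intro Z hZ hZeq t ht
  have hZint_cont : ContinuousOn (fun x => x⁻¹ • (Z x ᵥ* A)) (Ioi (0 : ℝ)) :=
    hinv_cont.smul (Equ2Aux.continuousOn_vecMul hZ continuousOn_const)
  have hD_cont : ContinuousOn (fun u => Z u - S u) (Ioi (0 : ℝ)) := hZ.sub hS_cont
  have hDint_cont : ContinuousOn (fun x => x⁻¹ • ((Z x - S x) ᵥ* A)) (Ioi (0 : ℝ)) :=
    hinv_cont.smul (Equ2Aux.continuousOn_vecMul hD_cont continuousOn_const)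
  have hDeq : ∀ u : ℝ, 0 < u →
      Z u - S u = ∫ x in (1:ℝ)..u, x⁻¹ • ((Z x - S x) ᵥ* A) := by
    intro u hu
    have h1 := hZeq u hu
    have h2 := hSolve u hu
    have hsub' := hsub hu
    have hstep : Z u - S u = (∫ x in (1:ℝ)..u, x⁻¹ • (Z x ᵥ* A))
        - ∫ x in (1:ℝ)..u, x⁻¹ • (S x ᵥ* A) := by
      rw [h1, h2]; abel
    rw [hstep, ← intervalIntegral.integral_sub
      ((hZint_cont.mono hsub').intervalIntegrable)
      ((hS_int_cont.mono hsub').intervalIntegrable)]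
    congr 1
    funext x
    rw [← smul_sub, ← Matrix.sub_vecMul]
  have hD1 : Z 1 - S 1 = 0 := by
    have h := hDeq 1 one_pos
    simpa [intervalIntegral.integral_same] using h
  have hD' : ∀ u : ℝ, 0 < u →
      HasDerivAt (fun r => Z r - S r) (u⁻¹ • ((Z u - S u) ᵥ* A)) u := by
    intro u hu
    have base : HasDerivAt (fun r => ∫ x in (1:ℝ)..r, x⁻¹ • ((Z x - S x) ᵥ* A))
        (u⁻¹ • ((Z u - S u) ᵥ* A)) u :=
      intervalIntegral.integral_hasDerivAt_right
        ((hDint_cont.mono (hsub hu)).intervalIntegrable)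
        (hDint_cont.stronglyMeasurableAtFilter isOpen_Ioi u hu)
        (hDint_cont.continuousAt (isOpen_Ioi.mem_nhds hu))
    apply base.congr_of_eventuallyEq
    filter_upwards [isOpen_Ioi.mem_nhds hu] with x hx
    exact hDeq x hx
  have hg' : ∀ u : ℝ, 0 < u →
      HasDerivAt (fun r => (Z r - S r) ᵥ* mpow A r⁻¹) 0 u := by
    intro u hu
    have hm : ∀ i j, HasDerivAt (fun r : ℝ => mpow A r⁻¹ i j)
        (((-u⁻¹) • (mpow A u⁻¹ * A)) i j) u := by
      intro i j
      have h1 := Equ2Aux.mpow_entry_hasDerivAt A (inv_pos.2 hu) i j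
      have h2 := hasDerivAt_inv hu.ne'
      have h := h1.comp u h2
      refine h.congr_deriv ?_
      simp only [Matrix.smul_apply, smul_eq_mul, Function.comp]
      have hu' : (u : ℝ) ≠ 0 := hu.ne'
      field_simp
    have h := Equ2Aux.hasDerivAt_vecMul (hD' u hu) hm
    convert h using 1
    rw [Matrix.smul_vecMul, Matrix.vecMul_vecMul, Equ2Aux.mpow_comm,
      Equ2Aux.vecMul_smul_right, ← Matrix.vecMul_vecMul, neg_smul]
    rw [Matrix.vecMul_vecMul]
    abel
  have hg_cont : ContinuousOn (fun r => (Z r - S r) ᵥ* mpow A r⁻¹) (Ioi (0 : ℝ)) :=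
    fun u hu => ((hg' u hu).continuousAt).continuousWithinAt
  have hgt : (Z t - S t) ᵥ* mpow A t⁻¹ = (Z 1 - S 1) ᵥ* mpow A 1⁻¹ := by
    rcases le_total (1:ℝ) t with h | h
    · have hIcc : Icc (1:ℝ) t ⊆ Ioi (0:ℝ) := fun x hx => lt_of_lt_of_le one_pos hx.1
      exact constant_of_has_deriv_right_zero (hg_cont.mono hIcc)
        (fun x hx => ((hg' x (lt_of_lt_of_le one_pos hx.1)).hasDerivWithinAt)) t ⟨h, le_rfl⟩
    · have hIcc : Icc t (1:ℝ) ⊆ Ioi (0:ℝ) := fun x hx => lt_of_lt_of_le ht hx.1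
      have h1 := constant_of_has_deriv_right_zero (hg_cont.mono hIcc)
        (fun x hx => ((hg' x (lt_of_lt_of_le ht hx.1)).hasDerivWithinAt)) 1 ⟨h, le_rfl⟩
      exact h1.symm
  have hDt : Z t - S t = 0 := by
    have h0 : (Z t - S t) ᵥ* mpow A t⁻¹ = 0 := by
      rw [hgt, hD1, Matrix.zero_vecMul]
    have h := congrArg (fun z => z ᵥ* mpow A t) h0
    simpa [Matrix.vecMul_vecMul, hmulinv ht, Matrix.vecMul_one, Matrix.zero_vecMul] using h
  exact sub_eq_zero.1 hDt

end
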